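/- For a compact metric space X, the following are equivalent: (1) every continuous map f : X → X has shadowing; (2) every continuous surjection f : X → X has shadowing; (3) X is finite. -/

import Mathlib

open Metric Set Function Filter Topology
attribute [local instance] Classical.propDecidable

/-- The system `(X, f)` has shadowing. -/
def HasShadowing {X : Type*} [MetricSpace X] (f : X → X) : Prop :=
  ∀ ε > (0 : ℝ), ∃ δ > (0 : ℝ), ∀ x : ℕ → X,
    (∀ i : ℕ, dist (f (x i)) (x (i + 1)) < δ) →
      ∃ z : X, ∀ i : ℕ, dist (f^[i] z) (x i) < ε

lemma clopen_basis_of_id_shadowing {X : Type*} [MetricSpace X] [CompactSpace X]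
    (h : HasShadowing (fun x : X => x)) (x : X) {ε : ℝ}
    (hε : 0 < ε) : ∃ K : Set X, IsClopen K ∧ x ∈ K ∧ K ⊆ ball x ε := by
  obtain ⟨δ, hδ, hsh⟩ := h (ε/3) (by linarith)
  set R : X → X → Prop := fun a b => dist a b < δ with hR
  refine ⟨{y | Relation.ReflTransGen R x y}, ⟨?_, ?_⟩, Relation.ReflTransGen.refl, ?_⟩
  · -- closed: complement open
    rw [← isOpen_compl_iff]
    rw [Metric.isOpen_iff]
    intro y hy
    refine ⟨δ, hδ, fun w hw hcon => hy ?_⟩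
    exact hcon.tail (show dist w y < δ by rw [mem_ball] at hw; exact hw)
  · rw [Metric.isOpen_iff]
    intro y hy
    exact ⟨δ, hδ, fun w hw => hy.tail (show dist y w < δ by rw [mem_ball] at hw; rwa [dist_comm] at hw)⟩
  · intro y hy
    simp only [mem_setOf_eq] at hy
    -- turn the chain into a pseudo-orbit
    have key : ∃ (c : ℕ → X) (N : ℕ), c 0 = x ∧ c N = y ∧ (∀ i, dist (c i) (c (i+1)) < δ) := by
      induction hy with
      | refl => exact ⟨fun _ => x, 0, rfl, rfl, fun i => by simpa using hδ⟩
      | @tail b y' hab hby ih =>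
        obtain ⟨c, N, hc0, hcN, hstep⟩ := ih
        refine ⟨fun i => if i ≤ N then c i else y', N+1, by simp [hc0], by simp, fun i => ?_⟩
        rcases lt_trichotomy i N with hi | hi | hi
        · simp only [hi.le, le_of_lt (Nat.lt_succ_of_lt hi), if_pos, Nat.succ_le_of_lt hi]
          simpa [hi.le, Nat.succ_le_of_lt hi] using hstep i
        · subst hi
          simpa [le_refl, Nat.not_succ_le_self, hcN] using hby
        · simp [Nat.not_le.2 hi, Nat.not_le.2 (Nat.lt_succ_of_lt hi), hδ]
    obtain ⟨c, N, hc0, hcN, hstep⟩ := key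
    obtain ⟨z, hz⟩ := hsh c (fun i => by simpa using hstep i)
    have h0 := hz 0
    have hN := hz N
    have hid : ∀ (i:ℕ) (w : X), (fun x:X => x)^[i] w = w := fun i w => congrFun (Function.iterate_id i) w
    rw [hid] at h0 hN
    rw [hc0] at h0; rw [hcN] at hN
    rw [mem_ball, dist_comm]
    calc dist x y ≤ dist x z + dist z y := dist_triangle _ _ _
    _ < ε/3 + ε/3 := by rw [dist_comm x z]; exact add_lt_add h0 hN
    _ < ε := by linarith

lemma framework {X : Type*} [MetricSpace X] [CompactSpace X] (p : X) (A B : ℕ → Set X)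
    (hAcl : ∀ n, IsClopen (A n)) (hBcl : ∀ n, IsClopen (B n))
    (hAne : ∀ n, (A n).Nonempty) (hBne : ∀ n, (B n).Nonempty)
    (hAA : ∀ m n, m ≠ n → Disjoint (A m) (A n))
    (hBB : ∀ m n, m ≠ n → Disjoint (B m) (B n))
    (hAB : ∀ m n, Disjoint (A m) (B n))
    (hpA : ∀ n, p ∉ A n) (hpB : ∀ n, p ∉ B n)
    (hshrink : ∀ ε > (0:ℝ), ∃ N, ∀ n ≥ N, A n ⊆ ball p ε ∧ B n ⊆ ball p ε)
    (sA sB : ℕ → X → X)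
    (hsAc : ∀ n, Continuous (sA n)) (hsBc : ∀ n, Continuous (sB n))
    (hsA : ∀ n, ∀ x ∈ A (n+1), sA (n+1) x ∈ A n)
    (hsA0 : ∀ x ∈ A 0, sA 0 x ∈ B 0)
    (hsB : ∀ n, ∀ x ∈ B n, sB n x ∈ B (n+1))
    (hsAsurj : ∀ n, A n ⊆ sA (n+1) '' A (n+1))
    (hsA0surj : B 0 ⊆ sA 0 '' A 0)
    (hsBsurj : ∀ n, B (n+1) ⊆ sB n '' B n) :
    ∃ f : X → X, Continuous f ∧ Surjective f ∧ ¬ HasShadowing f := by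
  classical
  set f : X → X := fun x =>
    if h : ∃ n, x ∈ A n then sA h.choose x
    else if h' : ∃ n, x ∈ B n then sB h'.choose x else x with hf
  have fA : ∀ n, ∀ x ∈ A n, f x = sA n x := by
    intro n x hx
    have h : ∃ m, x ∈ A m := ⟨n, hx⟩
    have : h.choose = n := by
      by_contra hne
      exact (hAA _ _ hne).ne_of_mem h.choose_spec hx rfl
    simp only [hf, dif_pos h, this]
  have fB : ∀ n, ∀ x ∈ B n, f x = sB n x := by
    intro n x hx
    have h' : ∃ m, x ∈ B m := ⟨n, hx⟩
    have hnA : ¬ ∃ m, x ∈ A m := by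
      rintro ⟨m, hm⟩
      exact (hAB m n).ne_of_mem hm hx rfl
    have : h'.choose = n := by
      by_contra hne
      exact (hBB _ _ hne).ne_of_mem h'.choose_spec hx rfl
    simp only [hf, dif_neg hnA, dif_pos h', this]
  have fid : ∀ x, (∀ n, x ∉ A n) → (∀ n, x ∉ B n) → f x = x := by
    intro x h1 h2
    have hnA : ¬ ∃ m, x ∈ A m := by rintro ⟨m, hm⟩; exact h1 m hm
    have hnB : ¬ ∃ m, x ∈ B m := by rintro ⟨m, hm⟩; exact h2 m hm
    simp only [hf, dif_neg hnA, dif_neg hnB]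
  have fp : f p = p := fid p hpA hpB
  -- mapping facts
  have mapsA : ∀ n, ∀ x ∈ A (n+1), f x ∈ A n := fun n x hx => (fA (n+1) x hx) ▸ hsA n x hx
  have mapsA0 : ∀ x ∈ A 0, f x ∈ B 0 := fun x hx => (fA 0 x hx) ▸ hsA0 x hx
  have mapsB : ∀ n, ∀ x ∈ B n, f x ∈ B (n+1) := fun n x hx => (fB n x hx) ▸ hsB n x hx
  have iterB : ∀ (b0 : X), b0 ∈ B 0 → ∀ i, f^[i] b0 ∈ B i := by
    intro b0 hb0 i
    induction i with
    | zero => simpa using hb0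
    | succ j ih => rw [Function.iterate_succ_apply']; exact mapsB j _ ih
  have iterA : ∀ (M : ℕ) (a : X), a ∈ A M → ∀ j ≤ M, f^[j] a ∈ A (M - j) := by
    intro M a ha j
    induction j with
    | zero => intro _; simpa using ha
    | succ j ih =>
      intro hj
      have h1 : f^[j] a ∈ A (M - j) := ih (by omega)
      have h2 : M - j = (M - (j+1)) + 1 := by omega
      rw [h2] at h1
      rw [Function.iterate_succ_apply']
      have := mapsA (M - (j+1)) _ h1
      exact this
  refine ⟨f, ?_, ?_, ?_⟩
  · -- continuity
    rw [continuous_iff_continuousAt]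
    intro x
    by_cases hxA : ∃ n, x ∈ A n
    · obtain ⟨n, hn⟩ := hxA
      exact ((hsAc n).continuousAt).congr
        (Filter.eventuallyEq_of_mem ((hAcl n).isOpen.mem_nhds hn) (fun y hy => fA n y hy)).symm
    by_cases hxB : ∃ n, x ∈ B n
    · obtain ⟨n, hn⟩ := hxB
      exact ((hsBc n).continuousAt).congr
        (Filter.eventuallyEq_of_mem ((hBcl n).isOpen.mem_nhds hn) (fun y hy => fB n y hy)).symm
    push_neg at hxA hxB
    by_cases hxp : x = p
    · -- continuity at p
      subst hxp
      rw [Metric.continuousAt_iff]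
      intro ε hε
      obtain ⟨N, hN⟩ := hshrink ε hε
      set S : Set X := ⋃ n ∈ Finset.range (N+1), (A n ∪ B n) with hS
      have hScl : IsClosed S := by
        apply Set.Finite.isClosed_biUnion (Finset.finite_toSet _)
        exact fun n _ => ((hAcl n).isClosed).union ((hBcl n).isClosed)
      have hpS : x ∉ S := by
        simp only [hS, Set.mem_iUnion]
        rintro ⟨n, -, hn | hn⟩
        exacts [hxA n hn, hxB n hn]
      obtain ⟨δ0, hδ0, hball⟩ := Metric.isOpen_iff.1 hScl.isOpen_compl x hpS
      refine ⟨min δ0 ε, by positivity, fun {y} hy => ?_⟩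
      have hyS : y ∉ S := hball (lt_of_lt_of_le hy (min_le_left _ _))
      have hyblock : ∀ n ≤ N, y ∉ A n ∧ y ∉ B n := by
        intro n hn
        constructor <;> intro hmem <;> exact hyS (by
          simp only [hS, Set.mem_iUnion]
          exact ⟨n, by simpa using Nat.lt_succ_of_le hn, by simp [hmem]⟩)
      rw [fp]
      by_cases hyA : ∃ n, y ∈ A n
      · obtain ⟨n, hn⟩ := hyA
        have hnN : N + 1 ≤ n := by
          by_contra hc
          exact (hyblock n (by omega)).1 hn
        obtain ⟨k, rfl⟩ : ∃ k, n = k + 1 := ⟨n - 1, by omega⟩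
        have : f y ∈ A k := mapsA k y hn
        have := (hN k (by omega)).1 this
        rwa [mem_ball] at this
      by_cases hyB : ∃ n, y ∈ B n
      · obtain ⟨n, hn⟩ := hyB
        have : f y ∈ B (n+1) := mapsB n y hn
        have hnN : N ≤ n + 1 := by
          by_contra hc
          exact (hyblock n (by omega)).2 hn
        have := (hN (n+1) hnN).2 this
        rwa [mem_ball] at this
      · push_neg at hyA hyB
        rw [fid y hyA hyB]
        exact lt_of_lt_of_le hy (min_le_right _ _)
    · -- continuity at other non-block points : f = id near x
      have hd : 0 < dist x p := dist_pos.2 hxp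
      obtain ⟨N, hN⟩ := hshrink (dist x p / 2) (by linarith)
      set S : Set X := ⋃ n ∈ Finset.range (N+1), (A n ∪ B n) with hS
      have hScl : IsClosed S := by
        apply Set.Finite.isClosed_biUnion (Finset.finite_toSet _)
        exact fun n _ => ((hAcl n).isClosed).union ((hBcl n).isClosed)
      have hpS : x ∉ S := by
        simp only [hS, Set.mem_iUnion]
        rintro ⟨n, -, hn | hn⟩
        exacts [hxA n hn, hxB n hn]
      have hW : Sᶜ ∩ ball x (dist x p / 2) ∈ 𝓝 x :=
        Filter.inter_mem (hScl.isOpen_compl.mem_nhds hpS)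
          (ball_mem_nhds x (by linarith))
      have heq : ∀ y ∈ Sᶜ ∩ ball x (dist x p / 2), f y = y := by
        rintro y ⟨hyS, hyb⟩
        apply fid
        · intro n hn
          rcases le_or_gt n N with h | h
          · exact hyS (by
              simp only [hS, Set.mem_iUnion]
              exact ⟨n, by simpa using Nat.lt_succ_of_le h, by simp [hn]⟩)
          · have : y ∈ ball p (dist x p / 2) := (hN n (by omega)).1 hn
            rw [mem_ball] at hyb this
            have := dist_triangle x y p
            rw [dist_comm y x] at *
            linarith [dist_comm y p ▸ this]
        · intro n hn
          rcases le_or_gt n N with h | h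
          · exact hyS (by
              simp only [hS, Set.mem_iUnion]
              exact ⟨n, by simpa using Nat.lt_succ_of_le h, by simp [hn]⟩)
          · have : y ∈ ball p (dist x p / 2) := (hN n (by omega)).2 hn
            rw [mem_ball] at hyb this
            have h3 := dist_triangle x y p
            rw [dist_comm y x] at hyb
            rw [dist_comm y p] at *
            linarith
      exact continuousAt_id.congr (Filter.eventuallyEq_of_mem hW heq).symm
  · -- surjectivity
    intro y
    by_cases hyA : ∃ n, y ∈ A n
    · obtain ⟨n, hn⟩ := hyA
      obtain ⟨w, hw, hwy⟩ := hsAsurj n hn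
      exact ⟨w, by rw [fA (n+1) w hw]; exact hwy⟩
    by_cases hyB : ∃ n, y ∈ B n
    · obtain ⟨n, hn⟩ := hyB
      cases n with
      | zero =>
        obtain ⟨w, hw, hwy⟩ := hsA0surj hn
        exact ⟨w, by rw [fA 0 w hw]; exact hwy⟩
      | succ m =>
        obtain ⟨w, hw, hwy⟩ := hsBsurj m hn
        exact ⟨w, by rw [fB m w hw]; exact hwy⟩
    · push_neg at hyA hyB
      exact ⟨y, fid y hyA hyB⟩
  · -- not shadowing
    intro hsh
    obtain ⟨b0, hb0⟩ := hBne 0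
    -- c : distance from p to A 0
    have hA0c : IsCompact (A 0) := (hAcl 0).isClosed.isCompact
    obtain ⟨a0, ha0, ha0d⟩ := hA0c.exists_infDist_eq_dist (hAne 0) p
    set c : ℝ := infDist p (A 0) with hc
    have hcpos : 0 < c := by
      rw [ha0d]
      exact dist_pos.2 (fun h => hpA 0 (h ▸ ha0))
    obtain ⟨r, hr, hrball⟩ := Metric.isOpen_iff.1 (hBcl 0).isOpen b0 hb0
    set ε : ℝ := min r (c/3) with hε
    have hεpos : 0 < ε := lt_min hr (by linarith)
    obtain ⟨δ, hδ, hshad⟩ := hsh ε hεpos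
    obtain ⟨N, hN⟩ := hshrink (min (δ/2) (c/3)) (lt_min (by linarith) (by linarith))
    obtain ⟨a, ha⟩ := hAne N
    set x : ℕ → X := fun i => if i ≤ N then f^[i] b0 else f^[i - (N+1)] a with hx
    have hpo : ∀ i, dist (f (x i)) (x (i+1)) < δ := by
      intro i
      rcases lt_trichotomy i N with hi | hi | hi
      · have h1 : x i = f^[i] b0 := by simp [hx, hi.le]
        have h2 : x (i+1) = f^[i+1] b0 := by simp [hx, Nat.succ_le_of_lt hi]
        rw [h1, h2, Function.iterate_succ_apply', dist_self]
        exact hδ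
      · have h1 : x i = f^[N] b0 := by simp [hx, hi]
        have h2 : x (i+1) = a := by
          have h3 : ¬ (i + 1 ≤ N) := by omega
          have h4 : i + 1 - (N+1) = 0 := by omega
          simp [hx, h3, h4]
        rw [h1, h2]
        have hfB : f (f^[N] b0) ∈ B (N+1) := mapsB N _ (iterB b0 hb0 N)
        have hB1 : f (f^[N] b0) ∈ ball p (min (δ/2) (c/3)) := (hN (N+1) (by omega)).2 hfB
        have hA1 : a ∈ ball p (min (δ/2) (c/3)) := (hN N le_rfl).1 ha
        rw [mem_ball] at hB1 hA1
        calc dist (f (f^[N] b0)) a ≤ dist (f (f^[N] b0)) p + dist p a := dist_triangle _ _ _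
        _ < min (δ/2) (c/3) + min (δ/2) (c/3) := by
            rw [dist_comm p a]; exact add_lt_add hB1 hA1
        _ ≤ δ/2 + δ/2 := by gcongr <;> exact min_le_left _ _
        _ = δ := by ring
      · have h1 : x i = f^[i - (N+1)] a := by simp [hx, Nat.not_le.2 hi]
        have h2 : x (i+1) = f^[i+1 - (N+1)] a := by
          simp [hx, Nat.not_le.2 (Nat.lt_succ_of_lt hi)]
        have h3 : i + 1 - (N+1) = (i - (N+1)) + 1 := by omega
        rw [h1, h2, h3, Function.iterate_succ_apply', dist_self]
        exact hδ
    obtain ⟨z, hz⟩ := hshad x hpo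
    have hz0 : z ∈ B 0 := by
      have := hz 0
      have hx0 : x 0 = b0 := by simp [hx]
      rw [hx0] at this
      simp only [Function.iterate_zero_apply] at this
      exact hrball (mem_ball.2 (lt_of_lt_of_le this (min_le_left _ _)))
    set i0 : ℕ := N + 1 + N with hi0
    have hzB : f^[i0] z ∈ B i0 := iterB z hz0 i0
    have hzBball : f^[i0] z ∈ ball p (min (δ/2) (c/3)) := (hN i0 (by omega)).2 hzB
    have hxA : x i0 ∈ A 0 := by
      have h1 : x i0 = f^[N] a := by
        have : ¬ (i0 ≤ N) := by omega
        have h2 : i0 - (N+1) = N := by omega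
        simp [hx, this, h2]
      rw [h1]
      have := iterA N a ha N le_rfl
      simpa using this
    have hcle : c ≤ dist p (x i0) := infDist_le_dist_of_mem hxA
    have hzd := hz i0
    rw [mem_ball] at hzBball
    have : dist p (x i0) ≤ dist p (f^[i0] z) + dist (f^[i0] z) (x i0) := dist_triangle _ _ _
    rw [dist_comm p (f^[i0] z)] at this
    have hεc : ε ≤ c/3 := min_le_right _ _
    have hδ2 : dist (f^[i0] z) p < c/3 := lt_of_lt_of_le hzBball (min_le_right _ _)
    linarith

lemma select_distinct {X : Type*} [MetricSpace X] [CompactSpace X] {U : Set X} (hUo : IsOpen U)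
    (hrich : ∀ W : Set X, IsOpen W → (W ∩ U).Nonempty → (W ∩ U).Infinite)
    (s : X → X) (hs : Continuous s) {η : ℝ} (hη : 0 < η) (T : Finset X)
    (hT : ∀ w ∈ T, ∃ y ∈ U, dist (s y) w ≤ η) :
    ∃ xf : X → X, Set.InjOn xf T ∧ ∀ w ∈ T, xf w ∈ U ∧ dist (s (xf w)) w ≤ 2 * η := by
  classical
  induction T using Finset.induction with
  | empty => exact ⟨id, by simp, by simp⟩
  | @insert w T hw ih =>
    obtain ⟨xf, hinj, hxf⟩ := ih (fun v hv => hT v (Finset.mem_insert_of_mem hv))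
    obtain ⟨y, hyU, hy⟩ := hT w (Finset.mem_insert_self w T)
    -- continuity at y
    obtain ⟨ρ, hρ, hmod⟩ := Metric.continuousAt_iff.1 hs.continuousAt η hη
    have hball : ((ball y ρ) ∩ U).Nonempty := ⟨y, mem_ball_self hρ, hyU⟩
    have hinf := hrich (ball y ρ) isOpen_ball hball
    obtain ⟨xw, hxwmem, hxwnot⟩ :
        ∃ xw, xw ∈ (ball y ρ ∩ U) ∧ xw ∉ (xf '' ↑T) := by
      have := (hinf.diff ((T.finite_toSet).image xf)).nonempty
      obtain ⟨v, hv1, hv2⟩ := this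
      exact ⟨v, hv1, hv2⟩
    refine ⟨Function.update xf w xw, ?_, ?_⟩
    · intro v1 h1 v2 h2 heq
      simp only [Finset.coe_insert, Set.mem_insert_iff] at h1 h2
      rcases h1 with rfl | h1 <;> rcases h2 with rfl | h2
      · rfl
      · rw [Function.update_self, Function.update_of_ne (by rintro rfl; exact hw h2)] at heq
        exact absurd ⟨v2, h2, heq.symm⟩ hxwnot
      · rw [Function.update_of_ne (by rintro rfl; exact hw h1), Function.update_self] at heq
        exact absurd ⟨v1, h1, heq⟩ hxwnot
      · rw [Function.update_of_ne (by rintro rfl; exact hw h1),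
          Function.update_of_ne (by rintro rfl; exact hw h2)] at heq
        exact hinj h1 h2 heq
    · intro v hv
      rcases Finset.mem_insert.1 hv with rfl | hv2
      · rw [Function.update_self]
        refine ⟨hxwmem.2, ?_⟩
        have h1 : dist (s xw) (s y) < η := hmod (mem_ball.1 hxwmem.1)
        calc dist (s xw) v ≤ dist (s xw) (s y) + dist (s y) v := dist_triangle _ _ _
        _ ≤ η + η := add_le_add h1.le hy
        _ = 2 * η := by ring
      · rw [Function.update_of_ne (by rintro rfl; exact hw hv2)]
        exact hxf v hv2

lemma surj_step {X : Type*} [MetricSpace X] [CompactSpace X]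
    (CB : ∀ (x : X) (ε : ℝ), 0 < ε → ∃ K, IsClopen K ∧ x ∈ K ∧ K ⊆ ball x ε)
    {U V : Set X} (hU : IsClopen U) (hV : IsClopen V) (hVne : V.Nonempty)
    (hrich : ∀ W : Set X, IsOpen W → (W ∩ U).Nonempty → (W ∩ U).Infinite)
    (s : X → X) (hs : Continuous s) (hsV : ∀ x, s x ∈ V) {η : ℝ} (hη : 0 < η)
    (hnet : ∀ v ∈ V, ∃ x ∈ U, dist (s x) v ≤ η) :
    ∃ s' : X → X, Continuous s' ∧ (∀ x, s' x ∈ V) ∧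
      (∀ x, dist (s' x) (s x) ≤ 3 * η) ∧ (∀ v ∈ V, ∃ x ∈ U, dist (s' x) v ≤ η / 2) := by
  classical
  -- finite η/2-net of V
  obtain ⟨t, htV, htfin, htcov⟩ :=
    finite_cover_balls_of_compact (hV.isClosed.isCompact) (show (0:ℝ) < η/2 by linarith)
  set T : Finset X := htfin.toFinset with hTdef
  have hTV : ∀ w ∈ T, w ∈ V := fun w hw => htV (htfin.mem_toFinset.1 hw)
  -- distinct preimage witnesses
  obtain ⟨xf, hinj, hxf⟩ := select_distinct hU.isOpen hrich s hs hη T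
    (fun w hw => hnet w (hTV w hw))
  -- radii
  have hrho : ∀ w ∈ (T : Set X), ∃ ρ, 0 < ρ ∧
      (∀ y, dist y (xf w) < ρ → dist (s y) (s (xf w)) ≤ η) ∧
      (∀ w' ∈ T, w' ≠ w → ρ ≤ dist (xf w) (xf w') / 2) := by
    intro w hw
    obtain ⟨ρ1, hρ1, hmod⟩ := Metric.continuousAt_iff.1 hs.continuousAt η hη
    by_cases he : (T.erase w).Nonempty
    · obtain ⟨w0, hw0, hmin⟩ := Finset.exists_min_image (T.erase w)
        (fun w' => dist (xf w) (xf w') / 2) he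
      have hpos : 0 < dist (xf w) (xf w0) / 2 := by
        have hne : xf w ≠ xf w0 := by
          intro heq
          exact (Finset.ne_of_mem_erase hw0)
            (hinj (Finset.mem_coe.2 (Finset.mem_of_mem_erase hw0)) hw heq.symm)
        have := dist_pos.2 hne
        linarith
      refine ⟨min ρ1 (dist (xf w) (xf w0) / 2), lt_min hρ1 hpos, ?_, ?_⟩
      · intro y hy
        exact (hmod (lt_of_lt_of_le hy (min_le_left _ _))).le
      · intro w' hw' hne
        exact le_trans (min_le_right _ _) (hmin w' (Finset.mem_erase.2 ⟨hne, hw'⟩))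
    · refine ⟨ρ1, hρ1, fun y hy => (hmod hy).le, fun w' hw' hne => ?_⟩
      exact absurd ⟨w', Finset.mem_erase.2 ⟨hne, hw'⟩⟩ he
  choose! ρ hρpos hρmod hρsep using hrho
  -- clopen pieces
  have hKex : ∀ w ∈ (T : Set X), ∃ K, IsClopen K ∧ xf w ∈ K ∧ K ⊆ ball (xf w) (ρ w) :=
    fun w hw => CB (xf w) (ρ w) (hρpos w hw)
  choose! K hKcl hKmem hKsub using hKex
  -- disjointness of the pieces
  have hKdisj : ∀ w ∈ (T : Set X), ∀ w' ∈ (T : Set X), w ≠ w' →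
      ∀ x, x ∈ K w → x ∈ K w' → False := by
    intro w hw w' hw' hne x hx hx'
    have h1 : dist x (xf w) < ρ w := mem_ball.1 (hKsub w hw hx)
    have h2 : dist x (xf w') < ρ w' := mem_ball.1 (hKsub w' hw' hx')
    have h3 : ρ w ≤ dist (xf w) (xf w') / 2 := hρsep w hw w' (Finset.mem_coe.1 hw') (Ne.symm hne)
    have h4 : ρ w' ≤ dist (xf w') (xf w) / 2 := hρsep w' hw' w (Finset.mem_coe.1 hw) hne
    have h5 : dist (xf w) (xf w') ≤ dist (xf w) x + dist x (xf w') := dist_triangle _ _ _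
    rw [dist_comm x (xf w)] at h1
    rw [dist_comm (xf w') (xf w)] at h4
    linarith
  -- the new map
  set s' : X → X := fun x =>
    if h : ∃ w, w ∈ (T : Set X) ∧ x ∈ K w ∩ U then h.choose else s x with hs'def
  have hon : ∀ w ∈ (T : Set X), ∀ x ∈ K w ∩ U, s' x = w := by
    intro w hw x hx
    have h : ∃ w', w' ∈ (T : Set X) ∧ x ∈ K w' ∩ U := ⟨w, hw, hx⟩
    have hcw : h.choose = w := by
      by_contra hne
      exact hKdisj _ h.choose_spec.1 w hw hne x h.choose_spec.2.1 hx.1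
    simp only [hs'def, dif_pos h, hcw]
  have hoff : ∀ x, (∀ w ∈ (T : Set X), x ∉ K w ∩ U) → s' x = s x := by
    intro x hx
    have h : ¬ ∃ w, w ∈ (T : Set X) ∧ x ∈ K w ∩ U := by
      rintro ⟨w, hw, hmem⟩; exact hx w hw hmem
    simp only [hs'def, dif_neg h]
  have hcases : ∀ x : X, (∃ w ∈ (T : Set X), x ∈ K w ∩ U) ∨ s' x = s x := by
    intro x
    by_cases h : ∃ w ∈ (T : Set X), x ∈ K w ∩ U
    · exact Or.inl h
    · push_neg at h
      exact Or.inr (hoff x h)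
  refine ⟨s', ?_, ?_, ?_, ?_⟩
  · -- continuity
    rw [continuous_iff_continuousAt]
    intro x
    rcases hcases x with ⟨w, hw, hx⟩ | _
    · -- locally constant near x
      have hopen : IsOpen (K w ∩ U) := (hKcl w hw).isOpen.inter hU.isOpen
      exact continuousAt_const.congr
        (Filter.eventuallyEq_of_mem (hopen.mem_nhds hx) (fun y hy => hon w hw y hy)).symm
    · -- equal to s near x; x outside the closed finite union
      by_cases hmem : ∃ w ∈ (T : Set X), x ∈ K w ∩ U
      · obtain ⟨w, hw, hx⟩ := hmem
        have hopen : IsOpen (K w ∩ U) := (hKcl w hw).isOpen.inter hU.isOpen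
        exact continuousAt_const.congr
          (Filter.eventuallyEq_of_mem (hopen.mem_nhds hx) (fun y hy => hon w hw y hy)).symm
      · push_neg at hmem
        have hclosed : IsClosed (⋃ w ∈ T, (K w ∩ U)) := by
          apply Set.Finite.isClosed_biUnion (Finset.finite_toSet _)
          exact fun w hw => ((hKcl w hw).isClosed).inter hU.isClosed
        have hxnot : x ∈ (⋃ w ∈ T, (K w ∩ U))ᶜ := by
          simp only [Set.mem_compl_iff, Set.mem_iUnion]
          rintro ⟨w, hw, hmem2⟩
          exact hmem w hw hmem2
        refine hs.continuousAt.congr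
          (Filter.eventuallyEq_of_mem (hclosed.isOpen_compl.mem_nhds hxnot) (fun y hy => ?_)).symm
        apply hoff
        intro w hw hmem2
        simp only [Set.mem_compl_iff, Set.mem_iUnion] at hy
        exact hy ⟨w, hw, hmem2⟩
  · -- values in V
    intro x
    rcases hcases x with ⟨w, hw, hx⟩ | heq
    · rw [hon w hw x hx]; exact hTV w hw
    · rw [heq]; exact hsV x
  · -- distance bound
    intro x
    rcases hcases x with ⟨w, hw, hx⟩ | heq
    · rw [hon w hw x hx]
      have h1 : dist (s x) (s (xf w)) ≤ η :=
        hρmod w hw x (mem_ball.1 (hKsub w hw hx.1))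
      have h2 : dist (s (xf w)) w ≤ 2 * η := (hxf w hw).2
      calc dist w (s x) ≤ dist w (s (xf w)) + dist (s (xf w)) (s x) := dist_triangle _ _ _
      _ ≤ 2 * η + η := add_le_add (dist_comm (s (xf w)) w ▸ h2) (dist_comm (s x) (s (xf w)) ▸ h1)
      _ = 3 * η := by ring
    · rw [heq, dist_self]; positivity
  · -- improved net
    intro v hv
    have hcov2 : ∃ w ∈ T, v ∈ ball w (η/2) := by
      have := htcov hv
      simp only [Set.mem_iUnion] at this
      obtain ⟨w, hw, hvw⟩ := this
      exact ⟨w, htfin.mem_toFinset.2 hw, hvw⟩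
    obtain ⟨w, hw, hvw⟩ := hcov2
    refine ⟨xf w, (hxf w hw).1, ?_⟩
    have hxK : xf w ∈ K w ∩ U := ⟨hKmem w hw, (hxf w hw).1⟩
    rw [hon w hw _ hxK]
    rw [mem_ball] at hvw
    rw [dist_comm]
    exact hvw.le

lemma exists_clopen_surjection {X : Type*} [MetricSpace X] [CompactSpace X]
    (CB : ∀ (x : X) (ε : ℝ), 0 < ε → ∃ K, IsClopen K ∧ x ∈ K ∧ K ⊆ ball x ε)
    {U V : Set X} (hU : IsClopen U) (hV : IsClopen V) (hUne : U.Nonempty) (hVne : V.Nonempty)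
    (hrich : ∀ W : Set X, IsOpen W → (W ∩ U).Nonempty → (W ∩ U).Infinite) :
    ∃ s : X → X, Continuous s ∧ (∀ x, s x ∈ V) ∧ V ⊆ s '' U := by
  classical
  obtain ⟨v0, hv0⟩ := hVne
  obtain ⟨u0, hu0⟩ := hUne
  set C : ℝ := Metric.diam (Set.univ : Set X) + 1 with hC
  have hCpos : 0 < C := by
    have := Metric.diam_nonneg (s := (Set.univ : Set X))
    linarith
  set Good : ℕ → (X → X) → Prop := fun k s =>
    Continuous s ∧ (∀ x, s x ∈ V) ∧ ∀ v ∈ V, ∃ x ∈ U, dist (s x) v ≤ C * (1/2)^k with hGood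
  have hbase : Good 0 (fun _ => v0) := by
    refine ⟨continuous_const, fun _ => hv0, fun v hv => ⟨u0, hu0, ?_⟩⟩
    have : dist v0 v ≤ Metric.diam (Set.univ : Set X) :=
      Metric.dist_le_diam_of_mem isCompact_univ.isBounded (Set.mem_univ _) (Set.mem_univ _)
    simp only [pow_zero, mul_one]
    linarith
  have hstep : ∀ k (s : X → X), Good k s →
      ∃ s', Good (k+1) s' ∧ ∀ x, dist (s' x) (s x) ≤ 3 * C * (1/2)^k := by
    intro k s hsG
    have hη : (0:ℝ) < C * (1/2)^k := by positivity
    obtain ⟨s', h1, h2, h3, h4⟩ := surj_step CB hU hV ⟨v0, hv0⟩ hrich s hsG.1 hsG.2.1 hη hsG.2.2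
    refine ⟨s', ⟨h1, h2, fun v hv => ?_⟩, fun x => by linarith [h3 x]⟩
    obtain ⟨x, hx, hd⟩ := h4 v hv
    refine ⟨x, hx, ?_⟩
    have : C * (1/2:ℝ)^k / 2 = C * (1/2)^(k+1) := by ring
    linarith [this ▸ hd]
  -- the recursive sequence
  let g : ∀ k : ℕ, {s : X → X // Good k s} := fun k =>
    Nat.rec ⟨fun _ => v0, hbase⟩
      (fun k ih => ⟨(hstep k ih.1 ih.2).choose, (hstep k ih.1 ih.2).choose_spec.1⟩) k
  set G : ℕ → X → X := fun k => (g k).1 with hG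
  have hgd : ∀ k x, dist (G (k+1) x) (G k x) ≤ 3 * C * (1/2)^k :=
    fun k x => (hstep k (g k).1 (g k).2).choose_spec.2 x
  have hgd' : ∀ x k, dist (G k x) (G (k+1) x) ≤ (3*C) * (1/2)^k :=
    fun x k => by rw [dist_comm]; simpa [mul_assoc] using hgd k x
  have hcauchy : ∀ x : X, ∃ l, Tendsto (fun k => G k x) atTop (𝓝 l) := by
    intro x
    have : CauchySeq (fun k => G k x) :=
      cauchySeq_of_le_geometric (1/2) (3*C) (by norm_num) (hgd' x)
    exact cauchySeq_tendsto_of_complete this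
  choose S hS using hcauchy
  have htail : ∀ k x, dist (G k x) (S x) ≤ 6 * C * (1/2)^k := by
    intro k x
    have := dist_le_of_le_geometric_of_tendsto (1/2) (3*C) (by norm_num) (hgd' x) (hS x) k
    have heq : 3*C * (1/2:ℝ)^k / (1 - 1/2) = 6 * C * (1/2)^k := by ring
    linarith [heq ▸ this]
  have hGc : ∀ k, Continuous (G k) := fun k => (g k).2.1
  have htendsto0 : Tendsto (fun k : ℕ => 6 * C * (1/2:ℝ)^k) atTop (𝓝 0) := by
    have := tendsto_pow_atTop_nhds_zero_of_lt_one (by norm_num : (0:ℝ) ≤ 1/2) (by norm_num)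
    simpa using this.const_mul (6*C)
  have hunif : TendstoUniformly G S atTop := by
    rw [Metric.tendstoUniformly_iff]
    intro ε hε
    have := (htendsto0.eventually (gt_mem_nhds hε))
    filter_upwards [this] with k hk x
    calc dist (S x) (G k x) = dist (G k x) (S x) := dist_comm _ _
    _ ≤ 6 * C * (1/2)^k := htail k x
    _ < ε := hk
  have hScont : Continuous S := hunif.continuous (Filter.Eventually.of_forall hGc).frequently
  refine ⟨S, hScont, ?_, ?_⟩
  · intro x
    exact hV.isClosed.mem_of_tendsto (hS x)
      (Filter.Eventually.of_forall (fun k => (g k).2.2.1 x))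
  · intro v hv
    set F : ℕ → Set X := fun k => {x | x ∈ U ∧ dist (G k x) v ≤ 6 * C * (1/2)^k} with hF
    have hFcl : ∀ k, IsClosed (F k) := by
      intro k
      apply IsClosed.inter hU.isClosed
      exact isClosed_le ((hGc k).dist continuous_const) continuous_const
    have hFne : ∀ k, (F k).Nonempty := by
      intro k
      obtain ⟨x, hx, hd⟩ := (g k).2.2.2 v hv
      refine ⟨x, hx, le_trans hd ?_⟩
      have : (0:ℝ) ≤ C * (1/2)^k := by positivity
      nlinarith
    have hFsub : ∀ k, F (k+1) ⊆ F k := by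
      intro k x hx
      refine ⟨hx.1, ?_⟩
      have h1 : dist (G k x) v ≤ dist (G k x) (G (k+1) x) + dist (G (k+1) x) v :=
        dist_triangle _ _ _
      have h2 := hgd' x k
      have h3 := hx.2
      have h4 : 6 * C * (1/2:ℝ)^(k+1) = 3 * C * (1/2)^k := by ring
      rw [h4] at h3
      linarith
    obtain ⟨x, hx⟩ := IsCompact.nonempty_iInter_of_sequence_nonempty_isCompact_isClosed
      F hFsub hFne ((hFcl 0).isCompact) hFcl
    have hxk : ∀ k, x ∈ F k := by simpa [Set.mem_iInter] using hx
    have hxU : x ∈ U := (hxk 0).1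
    have hdist : ∀ k : ℕ, dist (S x) v ≤ 12 * C * (1/2)^k := by
      intro k
      have h1 : dist (S x) v ≤ dist (S x) (G k x) + dist (G k x) v := dist_triangle _ _ _
      have h2 := htail k x
      rw [dist_comm (G k x) (S x)] at h2
      have h3 := (hxk k).2
      linarith
    have hle : dist (S x) v ≤ 0 := by
      have ht : Tendsto (fun k : ℕ => 12 * C * (1/2:ℝ)^k) atTop (𝓝 0) := by
        have := tendsto_pow_atTop_nhds_zero_of_lt_one (by norm_num : (0:ℝ) ≤ 1/2) (by norm_num)
        simpa using this.const_mul (12*C)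
      exact ge_of_tendsto ht (Filter.Eventually.of_forall hdist)
    have : S x = v := by
      have := le_antisymm hle dist_nonneg
      exact dist_eq_zero.1 this
    exact ⟨x, hxU, this⟩

lemma caseA {X : Type*} [MetricSpace X] [CompactSpace X]
    (hI : {x : X | IsOpen ({x} : Set X)}.Infinite) :
    ∃ f : X → X, Continuous f ∧ Surjective f ∧ ¬ HasShadowing f := by
  classical
  set I := {x : X | IsOpen ({x} : Set X)} with hIdef
  obtain ⟨p, hp⟩ := hI.exists_accPt_principal
  rw [accPt_iff_nhds] at hp
  have hkey : ∀ η : ℝ, 0 < η → ∃ q, q ∈ I ∧ q ≠ p ∧ dist q p < η := by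
    intro η hη
    obtain ⟨y, ⟨hy1, hy2⟩, hy3⟩ := hp (ball p η) (ball_mem_nhds p hη)
    exact ⟨y, hy2, hy3, mem_ball.1 hy1⟩
  -- recursively chosen sequence of isolated points with strictly decreasing distance to p
  have hstep : ∀ (n : ℕ) (q : {q : X // q ∈ I ∧ q ≠ p}),
      ∃ q' : {q : X // q ∈ I ∧ q ≠ p},
        dist q'.1 p < (1/2)^(n+1) ∧ dist q'.1 p < dist q.1 p := by
    intro n q
    have hpos : 0 < min ((1/2:ℝ)^(n+1)) (dist q.1 p) :=
      lt_min (by positivity) (dist_pos.2 q.2.2)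
    obtain ⟨q', h1, h2, h3⟩ := hkey _ hpos
    exact ⟨⟨q', h1, h2⟩, lt_of_lt_of_le h3 (min_le_left _ _),
      lt_of_lt_of_le h3 (min_le_right _ _)⟩
  choose st hst1 hst2 using hstep
  obtain ⟨q0, hq01, hq02, _⟩ := hkey 1 one_pos
  set seq : ℕ → {q : X // q ∈ I ∧ q ≠ p} :=
    fun n => Nat.rec ⟨q0, hq01, hq02⟩ (fun n ih => st n ih) n with hseq
  set d : ℕ → ℝ := fun n => dist (seq n).1 p with hd
  have hdlt : ∀ n, d (n+1) < (1/2)^(n+1) := fun n => hst1 n (seq n)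
  have hdec : StrictAnti d := strictAnti_nat_of_succ_lt (fun n => hst2 n (seq n))
  have hinj : ∀ m n : ℕ, (seq m).1 = (seq n).1 → m = n := by
    intro m n hmn
    by_contra hne
    have : d m ≠ d n := fun h => absurd h (hdec.injective.ne hne)
    exact this (congrArg (fun z : X => dist z p) hmn)
  -- blocks
  set A : ℕ → Set X := fun n => {(seq (2*n)).1} with hA
  set B : ℕ → Set X := fun n => {(seq (2*n+1)).1} with hB
  have hshrink : ∀ ε > (0:ℝ), ∃ N, ∀ n ≥ N, A n ⊆ ball p ε ∧ B n ⊆ ball p ε := by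
    intro ε hε
    obtain ⟨N, hN⟩ := exists_pow_lt_of_lt_one hε (by norm_num : (1/2:ℝ) < 1)
    refine ⟨N + 1, fun n hn => ?_⟩
    have hball : ∀ k : ℕ, k ≥ N + 1 → (seq k).1 ∈ ball p ε := by
      intro k hk
      obtain ⟨j, rfl⟩ : ∃ j, k = j + 1 := ⟨k - 1, by omega⟩
      have h1 : d (j+1) < (1/2)^(j+1) := hdlt j
      have h2 : ((1/2:ℝ))^(j+1) ≤ (1/2)^N :=
        pow_le_pow_of_le_one (by norm_num) (by norm_num) (by omega)
      rw [mem_ball]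
      calc dist (seq (j+1)).1 p < (1/2)^(j+1) := h1
      _ ≤ (1/2)^N := h2
      _ < ε := hN
    constructor
    · intro y hy
      rw [hA, Set.mem_singleton_iff] at hy
      subst hy
      exact hball (2*n) (by omega)
    · intro y hy
      rw [hB, Set.mem_singleton_iff] at hy
      subst hy
      exact hball (2*n+1) (by omega)
  apply framework p A B
    (fun n => ⟨isClosed_singleton, (seq (2*n)).2.1⟩)
    (fun n => ⟨isClosed_singleton, (seq (2*n+1)).2.1⟩)
    (fun n => ⟨_, rfl⟩) (fun n => ⟨_, rfl⟩)
    (fun m n hmn => by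
      simp only [hA, Set.disjoint_singleton]
      intro h
      exact hmn (by have := hinj _ _ h; omega))
    (fun m n hmn => by
      simp only [hB, Set.disjoint_singleton]
      intro h
      have h2 : (seq (2*m+1)).1 = (seq (2*n+1)).1 := h
      exact hmn (by have := hinj (2*m+1) (2*n+1) h2; omega))
    (fun m n => by
      simp only [hA, hB, Set.disjoint_singleton]
      intro h
      have h2 : (seq (2*m)).1 = (seq (2*n+1)).1 := h
      exact absurd (hinj (2*m) (2*n+1) h2) (by omega))
    (fun n => fun h => (seq (2*n)).2.2 (Set.mem_singleton_iff.1 h).symm)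
    (fun n => fun h => (seq (2*n+1)).2.2 (Set.mem_singleton_iff.1 h).symm)
    hshrink
    (fun n => Nat.casesOn n (fun _ => (seq 1).1) (fun m => fun _ => (seq (2*m)).1))
    (fun n => fun _ => (seq (2*(n+1)+1)).1)
    (fun n => by cases n <;> exact continuous_const)
    (fun n => continuous_const)
    (fun n x hx => by simp [hA])
    (fun x hx => by simp [hB])
    (fun n x hx => by simp [hB])
    (fun n => by
      intro y hy
      rw [hA, Set.mem_singleton_iff] at hy
      exact ⟨(seq (2*(n+1))).1, rfl, hy.symm⟩)
    (by
      intro y hy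
      rw [hB, Set.mem_singleton_iff] at hy
      exact ⟨(seq 0).1, rfl, hy.symm⟩)
    (fun n => by
      intro y hy
      rw [hB, Set.mem_singleton_iff] at hy
      exact ⟨(seq (2*n+1)).1, rfl, hy.symm⟩)

lemma caseB {X : Type*} [MetricSpace X] [CompactSpace X] [Infinite X]
    (CB : ∀ (x : X) (ε : ℝ), 0 < ε → ∃ K, IsClopen K ∧ x ∈ K ∧ K ⊆ ball x ε)
    (hI : {x : X | IsOpen ({x} : Set X)}.Finite) :
    ∃ f : X → X, Continuous f ∧ Surjective f ∧ ¬ HasShadowing f := by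
  classical
  set I := {x : X | IsOpen ({x} : Set X)} with hIdef
  set Y : Set X := Iᶜ with hY
  have hIclosed : IsClosed I := hI.isClosed
  have hIopen : IsOpen I := by
    have : I = ⋃ x ∈ I, ({x} : Set X) := by simp
    rw [this]
    exact isOpen_biUnion (fun x hx => hx)
  have hYclopen : IsClopen Y := ⟨hIopen.isClosed_compl, hIclosed.isOpen_compl⟩
  have hYinf : Y.Infinite := hI.infinite_compl
  -- richness: every open set meeting Y meets it in an infinite set
  have hrich : ∀ W : Set X, IsOpen W → (W ∩ Y).Nonempty → (W ∩ Y).Infinite := by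
    intro W hWo ⟨y, hyW, hyY⟩ hfin
    have hyiso : IsOpen ({y} : Set X) := by
      have hFcl : IsClosed ((W ∩ Y) \ {y}) := ((hfin.diff : ((W ∩ Y) \ {y}).Finite).isClosed)
      have hW' : IsOpen (W \ (((W ∩ Y) \ {y}) ∪ I)) :=
        hWo.sdiff (hFcl.union hIclosed)
      have heq : W \ (((W ∩ Y) \ {y}) ∪ I) = {y} := by
        apply Set.Subset.antisymm
        · rintro z ⟨hzW, hz⟩
          simp only [Set.mem_union, Set.mem_diff, Set.mem_singleton_iff, not_or, not_and,
            not_not] at hz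
          obtain ⟨hz1, hz2⟩ := hz
          by_cases hzy : z = y
          · exact hzy
          · exact absurd (hz1 ⟨hzW, hz2⟩ ) hzy
        · rintro z hz
          rw [Set.mem_singleton_iff] at hz
          subst hz
          refine ⟨hyW, ?_⟩
          simp only [Set.mem_union, Set.mem_diff, Set.mem_singleton_iff, not_or]
          exact ⟨fun h => h.2 trivial, hyY⟩
      rw [← heq]
      exact hW'
    exact hyY hyiso
  obtain ⟨p, hpY⟩ := hYinf.nonempty
  -- nested clopen neighborhoods
  set Q := {V : Set X // IsClopen V ∧ p ∈ V ∧ V ⊆ Y} with hQ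
  have hstep : ∀ (n : ℕ) (V : Q), ∃ V' : Q,
      V'.1 ⊆ V.1 ∧ V'.1 ⊆ ball p ((1/2)^(n+1)) ∧ (V.1 \ V'.1).Nonempty := by
    rintro n ⟨V, hVcl, hpV, hVY⟩
    have hVinf : (V ∩ Y).Infinite := hrich V hVcl.isOpen ⟨p, hpV, hVY hpV⟩
    obtain ⟨q, hq1, hq2⟩ : ∃ q ∈ V, q ≠ p := by
      obtain ⟨q, hq, hqne⟩ := (hVinf.diff (Set.finite_singleton p)).nonempty
      exact ⟨q, hq.1, by simpa using hqne⟩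
    have hdq : 0 < min ((1/2:ℝ)^(n+1)) (dist q p) := lt_min (by positivity) (dist_pos.2 hq2)
    obtain ⟨K, hKcl, hpK, hKsub⟩ := CB p _ hdq
    refine ⟨⟨V ∩ K, hVcl.inter hKcl, ⟨hpV, hpK⟩, fun x hx => hVY hx.1⟩, fun x hx => hx.1,
      fun x hx => ?_, ⟨q, hq1, fun hq3 => ?_⟩⟩
    · exact mem_ball.2 (lt_of_lt_of_le (mem_ball.1 (hKsub hx.2)) (min_le_left _ _))
    · have := mem_ball.1 (hKsub hq3.2)
      have h2 := min_le_right ((1/2:ℝ)^(n+1)) (dist q p)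
      linarith
  choose st hst1 hst2 hst3 using hstep
  set V0 : Q := ⟨Y, hYclopen, hpY, Set.Subset.refl Y⟩ with hV0
  set Vs : ℕ → Q := fun n => Nat.rec V0 (fun n ih => st n ih) n with hVs
  have hVanti : ∀ m n, m ≤ n → (Vs n).1 ⊆ (Vs m).1 := by
    intro m n hmn
    induction n with
    | zero => have : m = 0 := by omega
              subst this; exact Set.Subset.refl _
    | succ k ih =>
      rcases Nat.lt_or_ge m (k+1) with h | h
      · exact (hst1 k (Vs k)).trans (ih (by omega))
      · have : m = k+1 := by omega
        subst this; exact Set.Subset.refl _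
  -- the annuli
  set W : ℕ → Set X := fun n => (Vs n).1 \ (Vs (n+1)).1 with hW
  have hWcl : ∀ n, IsClopen (W n) := fun n => ((Vs n).2.1).diff ((Vs (n+1)).2.1)
  have hWne : ∀ n, (W n).Nonempty := fun n => hst3 n (Vs n)
  have hWY : ∀ n, W n ⊆ Y := fun n x hx => (Vs n).2.2.2 hx.1
  have hWp : ∀ n, p ∉ W n := fun n hmem => hmem.2 (Vs (n+1)).2.2.1
  have hWdisj : ∀ m n, m ≠ n → Disjoint (W m) (W n) := by
    have key : ∀ m n, m < n → Disjoint (W m) (W n) := by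
      intro m n hmn
      rw [Set.disjoint_left]
      intro x hxm hxn
      exact hxm.2 (hVanti (m+1) n hmn hxn.1)
    intro m n hmn
    rcases lt_or_gt_of_ne hmn with h | h
    · exact key m n h
    · exact (key n m h).symm
  have hWsmall : ∀ n, 1 ≤ n → W n ⊆ ball p ((1/2)^n) := by
    intro n hn x hx
    obtain ⟨j, rfl⟩ : ∃ j, n = j + 1 := ⟨n - 1, by omega⟩
    exact hst2 j (Vs j) hx.1
  -- continuous surjections between annuli
  have hWrich : ∀ n, ∀ Wo : Set X, IsOpen Wo → (Wo ∩ W n).Nonempty → (Wo ∩ W n).Infinite := by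
    intro n Wo hWo ⟨y, hy⟩ hfin
    have hOpen : IsOpen (Wo ∩ W n) := hWo.inter (hWcl n).isOpen
    have : ((Wo ∩ W n) ∩ Y).Infinite :=
      hrich _ hOpen ⟨y, hy, hWY n hy.2⟩
    exact this (hfin.subset (Set.inter_subset_left))
  have hσ : ∀ m n : ℕ, ∃ s : X → X, Continuous s ∧ (∀ x, s x ∈ W n) ∧ W n ⊆ s '' W m :=
    fun m n => exists_clopen_surjection CB (hWcl m) (hWcl n) (hWne m) (hWne n) (hWrich m)
  choose σ hσc hσv hσs using hσ
  -- blocks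
  set A : ℕ → Set X := fun n => W (2*n) with hA
  set B : ℕ → Set X := fun n => W (2*n+1) with hB
  have hshrink : ∀ ε > (0:ℝ), ∃ N, ∀ n ≥ N, A n ⊆ ball p ε ∧ B n ⊆ ball p ε := by
    intro ε hε
    obtain ⟨N, hN⟩ := exists_pow_lt_of_lt_one hε (by norm_num : (1/2:ℝ) < 1)
    refine ⟨N + 1, fun n hn => ?_⟩
    have hball : ∀ k : ℕ, k ≥ N + 1 → W k ⊆ ball p ε := by
      intro k hk x hx
      have h1 := hWsmall k (by omega) hx
      rw [mem_ball] at *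
      have h2 : ((1/2:ℝ))^k ≤ (1/2)^N :=
        pow_le_pow_of_le_one (by norm_num) (by norm_num) (by omega)
      linarith
    exact ⟨hball (2*n) (by omega), hball (2*n+1) (by omega)⟩
  exact framework p A B
    (fun n => hWcl (2*n)) (fun n => hWcl (2*n+1))
    (fun n => hWne (2*n)) (fun n => hWne (2*n+1))
    (fun m n hmn => hWdisj (2*m) (2*n) (by omega))
    (fun m n hmn => hWdisj (2*m+1) (2*n+1) (by omega))
    (fun m n => hWdisj (2*m) (2*n+1) (by omega))
    (fun n => hWp (2*n)) (fun n => hWp (2*n+1))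
    hshrink
    (fun n => Nat.casesOn n (σ 0 1) (fun m => σ (2*(m+1)) (2*m)))
    (fun n => σ (2*n+1) (2*(n+1)+1))
    (fun n => by cases n <;> apply hσc)
    (fun n => hσc _ _)
    (fun n x hx => hσv (2*(n+1)) (2*n) x)
    (fun x hx => hσv 0 1 x)
    (fun n x hx => hσv (2*n+1) (2*(n+1)+1) x)
    (fun n => hσs (2*(n+1)) (2*n))
    (hσs 0 1)
    (fun n => hσs (2*n+1) (2*(n+1)+1))


/-- For a compact metric space `X`, the following are equivalent: every continuous self-map
has shadowing; every continuous surjection has shadowing; `X` is finite. -/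
theorem every_map_shadowing_iff_finite
    {X : Type*} [MetricSpace X] [CompactSpace X] :
    List.TFAE
      [∀ f : X → X, Continuous f → HasShadowing f,
       ∀ f : X → X, Continuous f → Function.Surjective f → HasShadowing f,
       Finite X] := by
  tfae_have 1 → 2 := fun h f hf _ => h f hf
  tfae_have 3 → 1 := by
    intro hfin f hf
    intro ε hε
    by_cases hne : Nonempty X
    · have : Nonempty (X × X) := by infer_instance
      have hfinXX : Finite (X × X) := by infer_instance
      cases nonempty_fintype (X × X)
      obtain ⟨⟨a, b⟩, -, hab⟩ := Finset.exists_min_image (Finset.univ : Finset (X × X))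
        (fun q => if q.1 = q.2 then (1:ℝ) else dist q.1 q.2)
        ⟨Classical.arbitrary _, Finset.mem_univ _⟩
      set m : ℝ := if a = b then (1:ℝ) else dist a b with hm
      have hmpos : 0 < m := by
        rw [hm]; split_ifs with h
        · norm_num
        · exact dist_pos.2 h
      refine ⟨m, hmpos, fun x hx => ?_⟩
      have key : ∀ i, f^[i] (x 0) = x i := by
        intro i
        induction i with
        | zero => rfl
        | succ n ih =>
          rw [Function.iterate_succ_apply', ih]
          have := hx n
          by_contra hne2
          have : m ≤ dist (f (x n)) (x (n+1)) := by
            have := hab ⟨f (x n), x (n+1)⟩ (Finset.mem_univ _)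
            simpa [hne2] using this
          linarith [hx n]
      exact ⟨x 0, fun i => by rw [key i]; simpa using hε⟩
    · exact ⟨1, one_pos, fun x _ => ((not_nonempty_iff.1 hne).false (x 0)).elim⟩
  tfae_have 2 → 3 := by
    intro h2
    by_contra hX
    have hXinf : Infinite X := not_finite_iff_infinite.1 hX
    have hid : HasShadowing (fun x : X => x) :=
      h2 (fun x => x) continuous_id (fun y => ⟨y, rfl⟩)
    have CB : ∀ (x : X) (ε : ℝ), 0 < ε → ∃ K, IsClopen K ∧ x ∈ K ∧ K ⊆ ball x ε :=
      fun x ε hε => clopen_basis_of_id_shadowing hid x hε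
    by_cases hI : {x : X | IsOpen ({x} : Set X)}.Infinite
    · obtain ⟨f, hc, hsurj, hns⟩ := caseA hI
      exact hns (h2 f hc hsurj)
    · obtain ⟨f, hc, hsurj, hns⟩ := caseB CB (Set.not_infinite.1 hI)
      exact hns (h2 f hc hsurj)
  tfae_finish
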